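/- arXiv:2603.19422 — 6 statements merged into one kernel-verified Lean document; each statement's English description precedes it below -/
import Mathlib

section
/- Let (μ_j)_{j≥1} be a sequence of nonnegative reals with μ_j ≤ j^{-2α} for all j ≥ 1, where α ≥ 1. Then for every λ ∈ (0,1], the effective dimension r(λ) = ∑_{j=1}^∞ μ_j/(μ_j + λ) satisfies r(λ) ≤ (2α/(2α-1)) · λ^{-1/(2α)}. -/
/-- Effective dimension bound under polynomial eigendecay `μ_j ≤ j^{-2α}`, `α ≥ 1`:
for `λ ∈ (0,1]`, `∑_{j≥1} μ_j/(μ_j+λ) ≤ (2α/(2α-1)) λ^{-1/(2α)}`. -/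
theorem stmt_2 (α : ℝ) (hα : 1 ≤ α) (μ : ℕ → ℝ)
    (hnn : ∀ j : ℕ, 1 ≤ j → 0 ≤ μ j)
    (hdecay : ∀ j : ℕ, 1 ≤ j → μ j ≤ (j : ℝ) ^ (-(2 * α)))
    (lam : ℝ) (hl : 0 < lam) (hl1 : lam ≤ 1) :
    ∑' j : ℕ, μ (j + 1) / (μ (j + 1) + lam) ≤
      (2 * α / (2 * α - 1)) * lam ^ (-(1 / (2 * α))) := by
  set c : ℝ := lam ^ (-(1 / (2 * α))) with hc
  have h2α : (1:ℝ) < 2 * α := by linarith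
  have h2α0 : (0:ℝ) < 2 * α := by linarith
  have hc1 : 1 ≤ c :=
    Real.one_le_rpow_of_pos_of_le_one_of_nonpos hl hl1 (by rw [neg_nonpos]; positivity)
  have hc0 : 0 < c := lt_of_lt_of_le one_pos hc1
  -- c ^ (-(2α)) = lam
  have hck : c ^ (-(2 * α)) = lam := by
    rw [hc, ← Real.rpow_mul hl.le]
    rw [show -(1 / (2 * α)) * -(2 * α) = 1 by field_simp]
    exact Real.rpow_one lam
  -- the dominating function
  set g : ℝ → ℝ := fun x => if x ≤ c then 1 else x ^ (-(2 * α)) / lam with hg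
  have hganti : AntitoneOn g (Set.Ici (0:ℝ)) := by
    intro x hx y hy hxy
    simp only [hg]
    by_cases hyc : y ≤ c
    · rw [if_pos (hxy.trans hyc), if_pos hyc]
    · push_neg at hyc
      rw [if_neg (not_le.mpr hyc)]
      have hylam : y ^ (-(2 * α)) ≤ lam := by
        rw [← hck]
        exact Real.rpow_le_rpow_of_nonpos hc0 hyc.le (by linarith)
      by_cases hxc : x ≤ c
      · rw [if_pos hxc]
        exact div_le_one_of_le₀ hylam hl.le
      · push_neg at hxc
        rw [if_neg (not_le.mpr hxc)]
        exact div_le_div_of_nonneg_right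
          (Real.rpow_le_rpow_of_nonpos (lt_trans hc0 hxc) hxy (by linarith)) hl.le
  -- termwise bound
  have hterm : ∀ j : ℕ, μ (j + 1) / (μ (j + 1) + lam) ≤ g (j + 1 : ℕ) := by
    intro j
    have h1 : 1 ≤ j + 1 := Nat.le_add_left 1 j
    have hμ : 0 ≤ μ (j + 1) := hnn _ h1
    have hden : 0 < μ (j + 1) + lam := by linarith
    simp only [hg]
    by_cases hjc : ((j:ℝ) + 1) ≤ c
    · rw [Nat.cast_add, Nat.cast_one, if_pos hjc]
      rw [div_le_one hden]; linarith
    · rw [Nat.cast_add, Nat.cast_one, if_neg hjc]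
      have : μ (j + 1) / (μ (j + 1) + lam) ≤ μ (j + 1) / lam :=
        div_le_div_of_nonneg_left hμ hl (by linarith)
      refine this.trans (div_le_div_of_nonneg_right ?_ hl.le)
      have := hdecay (j + 1) h1
      rwa [Nat.cast_add, Nat.cast_one] at this
  have hterm_nn : ∀ j : ℕ, 0 ≤ μ (j + 1) / (μ (j + 1) + lam) := by
    intro j
    have hμ : 0 ≤ μ (j + 1) := hnn _ (Nat.le_add_left 1 j)
    positivity
  -- RHS rewrite
  have hRHS : (2 * α / (2 * α - 1)) * c = c + c / (2 * α - 1) := by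
    have hne : 2 * α - 1 ≠ 0 := by linarith
    field_simp
    ring
  rw [hRHS]
  apply Real.tsum_le_of_sum_range_le hterm_nn
  intro n
  have hsum1 : ∑ j ∈ Finset.range n, μ (j + 1) / (μ (j + 1) + lam) ≤
      ∑ j ∈ Finset.range n, g (j + 1 : ℕ) :=
    Finset.sum_le_sum fun j _ => hterm j
  have hsum2 : ∑ j ∈ Finset.range n, g (j + 1 : ℕ) ≤ ∫ x in (0:ℝ)..n, g x := by
    have := (hganti.mono (by
      intro x hx
      exact hx.1 : Set.Icc (0:ℝ) (0 + n) ⊆ Set.Ici 0)).sum_le_integral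
    simpa using this
  refine (hsum1.trans (hsum2.trans ?_))
  -- bound the integral
  by_cases hnc : (n:ℝ) ≤ c
  · -- g = 1 on [0,n]
    have : ∫ x in (0:ℝ)..n, g x = ∫ x in (0:ℝ)..n, (1:ℝ) := by
      apply intervalIntegral.integral_congr
      intro x hx
      rw [Set.uIcc_of_le (by exact_mod_cast Nat.cast_nonneg n : (0:ℝ) ≤ n)] at hx
      simp only [hg]
      exact if_pos (hx.2.trans hnc)
    rw [this]
    simp only [intervalIntegral.integral_const, smul_eq_mul, mul_one, sub_zero]
    have : 0 ≤ c / (2 * α - 1) := div_nonneg hc0.le (by linarith)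
    linarith
  · push_neg at hnc
    have hInt2 : ∫ x in c..(n:ℝ), g x ≤ c / (2 * α - 1) := by
      have heq : ∫ x in c..(n:ℝ), g x = ∫ x in c..(n:ℝ), x ^ (-(2 * α)) / lam := by
        rw [intervalIntegral.integral_of_le hnc.le,
            intervalIntegral.integral_of_le hnc.le]
        apply MeasureTheory.setIntegral_congr_fun measurableSet_Ioc
        intro x hx
        simp only [hg]
        exact if_neg (not_le.mpr hx.1)
      rw [heq]
      have hpow : ∫ x in c..(n:ℝ), x ^ (-(2 * α)) =
          ((n:ℝ) ^ (-(2 * α) + 1) - c ^ (-(2 * α) + 1)) / (-(2 * α) + 1) := by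
        apply integral_rpow
        right
        constructor
        · intro h; linarith
        · intro h
          rw [Set.uIcc_of_le hnc.le] at h
          linarith [h.1]
      have hc' : c ^ (-(2 * α) + 1) = lam * c := by
        rw [Real.rpow_add hc0, Real.rpow_one, hck]
      have hnn' : 0 ≤ (n:ℝ) ^ (-(2 * α) + 1) := Real.rpow_nonneg (by positivity) _
      rw [intervalIntegral.integral_div, hpow, hc']
      rw [div_le_div_iff₀ (by linarith) (by linarith)]
      have : ((n:ℝ) ^ (-(2 * α) + 1) - lam * c) / (-(2 * α) + 1) =
          (lam * c - (n:ℝ) ^ (-(2 * α) + 1)) / (2 * α - 1) := by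
        rw [div_eq_div_iff (by linarith) (by linarith)]; ring
      rw [this, div_mul_eq_mul_div, div_le_iff₀ (by linarith)]
      nlinarith [mul_pos hl hc0]
    have hInt1 : ∫ x in (0:ℝ)..c, g x = c := by
      have : ∫ x in (0:ℝ)..c, g x = ∫ x in (0:ℝ)..c, (1:ℝ) := by
        apply intervalIntegral.integral_congr
        intro x hx
        rw [Set.uIcc_of_le hc0.le] at hx
        simp only [hg]
        exact if_pos hx.2
      rw [this]
      simp
    have hIg1 : IntervalIntegrable g MeasureTheory.volume 0 c := by
      apply AntitoneOn.intervalIntegrable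
      rw [Set.uIcc_of_le hc0.le]
      exact hganti.mono (fun x hx => hx.1)
    have hIg2 : IntervalIntegrable g MeasureTheory.volume c n := by
      apply AntitoneOn.intervalIntegrable
      rw [Set.uIcc_of_le hnc.le]
      exact hganti.mono (fun x hx => le_trans hc0.le hx.1)
    rw [← intervalIntegral.integral_add_adjacent_intervals hIg1 hIg2, hInt1]
    linarith
end

section
/- Let A ≥ 1, α ≥ 1, and suppose μ_j ≤ A j^{-2α} for all j ≥ 1. Then for λ ∈ (0, A], r(λ) = ∑_{j=1}^∞ μ_j/(μ_j + λ) ≤ (2α A^{1/(2α)}/(2α - 1)) λ^{-1/(2α)}. -/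
/-- Effective dimension bound under eigendecay `μ_j ≤ A j^{-2α}`, `A ≥ 1`, `α ≥ 1`:
for `λ ∈ (0,A]`, `∑_{j≥1} μ_j/(μ_j+λ) ≤ (2α A^{1/(2α)}/(2α-1)) λ^{-1/(2α)}`. -/
theorem stmt_3 (A α : ℝ) (hA : 1 ≤ A) (hα : 1 ≤ α) (μ : ℕ → ℝ)
    (hnn : ∀ j : ℕ, 1 ≤ j → 0 ≤ μ j)
    (hdecay : ∀ j : ℕ, 1 ≤ j → μ j ≤ A * (j : ℝ) ^ (-(2 * α)))
    (lam : ℝ) (hl : 0 < lam) (hlA : lam ≤ A) :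
    ∑' j : ℕ, μ (j + 1) / (μ (j + 1) + lam) ≤
      (2 * α * A ^ (1 / (2 * α)) / (2 * α - 1)) * lam ^ (-(1 / (2 * α))) := by
  have h2α : (2:ℝ) ≤ 2 * α := by linarith
  have h2α1 : (1:ℝ) < 2 * α := by linarith
  have h2αpos : (0:ℝ) < 2 * α := by linarith
  have hc : (0:ℝ) < 2 * α - 1 := by linarith
  have hcne : (2 * α - 1 : ℝ) ≠ 0 := ne_of_gt hc
  set C : ℝ := A / lam with hCdef
  have hC : 1 ≤ C := (one_le_div hl).2 hlA
  have hCpos : 0 < C := by linarith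
  set T : ℝ := C ^ (1 / (2 * α)) with hTdef
  have hTpos : 0 < T := Real.rpow_pos_of_pos hCpos _
  have hT1 : 1 ≤ T := Real.one_le_rpow hC (by positivity)
  -- the dominating antitone function
  set f : ℝ → ℝ := fun x => if x ≤ 0 then 1 else min 1 (C * x ^ (-(2 * α))) with hfdef
  have hf_le_one : ∀ x, f x ≤ 1 := by
    intro x
    simp only [hfdef]
    split
    · exact le_refl 1
    · exact min_le_left _ _
  have hf_anti : Antitone f := by
    intro x y hxy
    simp only [hfdef]
    by_cases hx : x ≤ 0
    · simp only [hx, if_true]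
      split
      · exact le_refl 1
      · exact min_le_left _ _
    · have hy : ¬ y ≤ 0 := fun h => hx (hxy.trans h)
      simp only [hx, hy, if_false]
      apply min_le_min (le_refl 1)
      have := Real.rpow_le_rpow_of_nonpos (lt_of_not_ge hx) hxy (by linarith : -(2*α) ≤ 0)
      nlinarith
  -- key identities
  have hCT : C * T ^ (-(2 * α)) = 1 := by
    have e1 : (1 / (2 * α)) * (-(2 * α)) = -1 := by field_simp
    rw [hTdef, ← Real.rpow_mul hCpos.le, e1, Real.rpow_neg_one]
    exact mul_inv_cancel₀ (ne_of_gt hCpos)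
  have hkey : C * T ^ (-(2 * α) + 1) = T := by
    have e1 : T ^ (-(2 * α) + 1) = C ^ ((1 / (2 * α)) * (-(2 * α) + 1)) := by
      rw [hTdef, ← Real.rpow_mul hCpos.le]
    rw [e1]
    have e2 : (1 / (2 * α)) * (-(2 * α) + 1) = -1 + 1 / (2 * α) := by field_simp
    rw [e2, Real.rpow_add hCpos, Real.rpow_neg_one, ← mul_assoc,
      mul_inv_cancel₀ (ne_of_gt hCpos), one_mul, hTdef]
  have hf_eval : ∀ x : ℝ, 0 < x → T ≤ x → f x = C * x ^ (-(2 * α)) := by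
    intro x hx hTx
    have hxT : C * x ^ (-(2 * α)) ≤ 1 := by
      have h1 : x ^ (-(2*α)) ≤ T ^ (-(2*α)) := Real.rpow_le_rpow_of_nonpos hTpos hTx (by linarith)
      calc C * x ^ (-(2*α)) ≤ C * T ^ (-(2*α)) := by
            exact mul_le_mul_of_nonneg_left h1 hCpos.le
        _ = 1 := hCT
    simp only [hfdef, not_le.2 hx, if_false, min_eq_right hxT]
  -- termwise bound
  have hterm : ∀ j : ℕ, μ (j + 1) / (μ (j + 1) + lam) ≤ f ((j:ℝ) + 1) := by
    intro j
    have hj1 : 1 ≤ j + 1 := Nat.le_add_left 1 j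
    have hμ : 0 ≤ μ (j + 1) := hnn _ hj1
    have hd := hdecay (j+1) hj1
    have hjpos : (0:ℝ) < (j:ℝ) + 1 := by positivity
    have hne : ¬ ((j:ℝ) + 1 ≤ 0) := by push_neg; exact hjpos
    simp only [hfdef, hne, if_false]
    refine le_min ?_ ?_
    · rw [div_le_one (by linarith)]; linarith
    · have h1 : μ (j + 1) / (μ (j + 1) + lam) ≤ μ (j + 1) / lam := by
        gcongr <;> linarith
      refine h1.trans ?_
      rw [hCdef, div_mul_eq_mul_div]
      gcongr
      simpa [Nat.cast_add, Nat.cast_one] using hd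
  -- partial sum bound via integral comparison
  have hbound : ∀ n : ℕ, ∑ i ∈ Finset.range n, μ (i + 1) / (μ (i + 1) + lam)
      ≤ T + T / (2 * α - 1) := by
    intro n
    have hsum1 : ∑ i ∈ Finset.range n, μ (i + 1) / (μ (i + 1) + lam)
        ≤ ∑ i ∈ Finset.range n, f ((i:ℝ) + 1) := by
      apply Finset.sum_le_sum
      intro i _
      exact hterm i
    have hsum2 : ∑ i ∈ Finset.range n, f ((i:ℝ) + 1) ≤ ∫ x in (0:ℝ)..(n:ℝ), f x := by
      have := (hf_anti.antitoneOn (Set.Icc (0:ℝ) (0 + n))).sum_le_integral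
      simpa using this
    have hint : ∫ x in (0:ℝ)..(n:ℝ), f x ≤ T + T / (2 * α - 1) := by
      rcases le_or_gt (n:ℝ) T with hn | hn
      · have h1 : ∫ x in (0:ℝ)..(n:ℝ), f x ≤ ∫ x in (0:ℝ)..(n:ℝ), (1:ℝ) := by
          apply intervalIntegral.integral_mono_on (Nat.cast_nonneg n)
          · exact (hf_anti.antitoneOn _).intervalIntegrable
          · exact intervalIntegrable_const
          · intro x _; exact hf_le_one x
        have h2 : ∫ x in (0:ℝ)..(n:ℝ), (1:ℝ) = n := by simp
        have hd : 0 ≤ T / (2*α - 1) := div_nonneg hTpos.le hc.le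
        rw [h2] at h1
        linarith
      · have hsplit : ∫ x in (0:ℝ)..(n:ℝ), f x
            = (∫ x in (0:ℝ)..T, f x) + ∫ x in T..(n:ℝ), f x := by
          rw [intervalIntegral.integral_add_adjacent_intervals]
          · exact (hf_anti.antitoneOn _).intervalIntegrable
          · exact (hf_anti.antitoneOn _).intervalIntegrable
        have hI1 : ∫ x in (0:ℝ)..T, f x ≤ T := by
          have h1 : ∫ x in (0:ℝ)..T, f x ≤ ∫ x in (0:ℝ)..T, (1:ℝ) := by
            apply intervalIntegral.integral_mono_on hTpos.le
            · exact (hf_anti.antitoneOn _).intervalIntegrable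
            · exact intervalIntegrable_const
            · intro x _; exact hf_le_one x
          simpa using h1
        have hI2 : ∫ x in T..(n:ℝ), f x ≤ T / (2 * α - 1) := by
          have heq : ∫ x in T..(n:ℝ), f x = ∫ x in T..(n:ℝ), C * x ^ (-(2*α)) := by
            apply intervalIntegral.integral_congr
            intro x hx
            rw [Set.uIcc_of_le hn.le] at hx
            exact hf_eval x (lt_of_lt_of_le hTpos hx.1) hx.1
          have hrpow : ∫ x in T..(n:ℝ), x ^ (-(2*α))
              = ((n:ℝ) ^ (-(2*α) + 1) - T ^ (-(2*α) + 1)) / (-(2*α) + 1) := by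
            apply integral_rpow
            right
            constructor
            · intro h
              have : (2:ℝ) * α = 1 := by linarith [neg_injective h]
              linarith
            · rw [Set.uIcc_of_le hn.le]
              intro h
              exact absurd h.1 (not_le.2 hTpos)
          have habs : ∀ u v : ℝ, C * ((v - u) / (-(2*α) + 1)) = (C * u - C * v) / (2*α - 1) := by
            intro u v
            rw [show -(2*α) + 1 = -(2*α - 1) by ring, div_neg, mul_neg, ← mul_div_assoc,
              ← neg_div]
            congr 1
            ring
          have hv0 : 0 ≤ C * (n:ℝ) ^ (-(2*α) + 1) :=
            mul_nonneg hCpos.le (Real.rpow_nonneg (Nat.cast_nonneg n) _)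
          calc ∫ x in T..(n:ℝ), f x
              = C * (((n:ℝ) ^ (-(2*α) + 1) - T ^ (-(2*α) + 1)) / (-(2*α) + 1)) := by
                rw [heq, intervalIntegral.integral_const_mul, hrpow]
            _ = (C * T ^ (-(2*α) + 1) - C * (n:ℝ) ^ (-(2*α) + 1)) / (2*α - 1) := habs _ _
            _ ≤ (C * T ^ (-(2*α) + 1)) / (2*α - 1) := by gcongr; linarith
            _ = T / (2*α - 1) := by rw [hkey]
        rw [hsplit]
        linarith
    exact hsum1.trans (hsum2.trans hint)
  have hfinal : ∑' j : ℕ, μ (j + 1) / (μ (j + 1) + lam) ≤ T + T / (2 * α - 1) := by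
    apply Real.tsum_le_of_sum_range_le
    · intro j
      have hj1 : 1 ≤ j + 1 := Nat.le_add_left 1 j
      exact div_nonneg (hnn _ hj1) (by linarith [hnn _ hj1])
    · exact hbound
  refine hfinal.trans ?_
  have hTsplit : T = A ^ (1 / (2 * α)) * lam ^ (-(1 / (2 * α))) := by
    rw [hTdef, hCdef, Real.div_rpow (by linarith) hl.le, Real.rpow_neg hl.le, div_eq_mul_inv]
  have h1 : T + T / (2 * α - 1) = 2 * α * T / (2 * α - 1) := by
    rw [eq_div_iff hcne, add_mul, div_mul_cancel₀ _ hcne]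
    ring
  rw [h1, hTsplit]
  apply le_of_eq
  ring
end

section
/- Let a : ℝ → ℝ satisfy k ≤ a''(z) for all |z| ≤ 2C, with k > 0, and suppose a'' is L-Lipschitz on [-2C, 2C]. Let q_i lie between f*(x_i) and f̃(x_i) where |f*(x_i)| ≤ C and |f̃(x_i) - f*(x_i)| ≤ η ≤ C with Lη/k < 1. Then for any vector z ∈ ℝⁿ, the weighted norms ‖z‖²_{D̄} := ∑_i a''(f*(x_i)) z_i² and ‖z‖²_{D̃} := ∑_i a''(q_i) z_i² satisfy |‖z‖²_{D̄} - ‖z‖²_{D̃}| ≤ (Lη/k) ‖z‖²_{D̃}, and hence ‖z‖_{D̄} ≤ √2 ‖z‖_{D̃} when Lη/k ≤ 1. -/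
/-- Comparison of the weighted norms `‖z‖_{D̄}` (weights `a''(f*(x_i))`) and
`‖z‖_{D̃}` (weights `a''(q_i)`) under local strong convexity and Lipschitz
continuity of `a''` on `[-2C, 2C]`. -/
theorem stmt_9 (n : ℕ) (a : ℝ → ℝ) (C k L η : ℝ) (hk : 0 < k) (hC : 0 ≤ C)
    (hL : 0 ≤ L) (hη0 : 0 ≤ η)
    (fstar ftil q : Fin n → ℝ)
    (hconv : ∀ z : ℝ, |z| ≤ 2 * C → k ≤ deriv (deriv a) z)
    (hlip : ∀ z w : ℝ, |z| ≤ 2 * C → |w| ≤ 2 * C →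
      |deriv (deriv a) z - deriv (deriv a) w| ≤ L * |z - w|)
    (hfstar : ∀ i, |fstar i| ≤ C) (hftil : ∀ i, |ftil i - fstar i| ≤ η)
    (hη : η ≤ C) (hq : ∀ i, q i ∈ Set.uIcc (fstar i) (ftil i))
    (hLη : L * η / k < 1) (z : Fin n → ℝ) :
    |(∑ i, deriv (deriv a) (fstar i) * z i ^ 2) - ∑ i, deriv (deriv a) (q i) * z i ^ 2|
        ≤ L * η / k * ∑ i, deriv (deriv a) (q i) * z i ^ 2 ∧
      Real.sqrt (∑ i, deriv (deriv a) (fstar i) * z i ^ 2)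
        ≤ Real.sqrt 2 * Real.sqrt (∑ i, deriv (deriv a) (q i) * z i ^ 2) := by
  set g := deriv (deriv a)
  -- pointwise bounds
  have hqf : ∀ i, |q i - fstar i| ≤ η := by
    intro i
    have h := hq i
    rw [Set.uIcc_eq_union] at h
    rcases h with h | h
    · rw [abs_le]
      constructor
      · linarith [h.1, abs_le.1 (hftil i) |>.1, abs_le.1 (hftil i) |>.2]
      · linarith [h.2, abs_le.1 (hftil i) |>.2]
    · rw [abs_le]
      constructor
      · linarith [h.1, abs_le.1 (hftil i) |>.1]
      · linarith [h.2, abs_le.1 (hftil i) |>.1]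
  have hfC : ∀ i, |fstar i| ≤ 2 * C := fun i => le_trans (hfstar i) (by linarith)
  have hqC : ∀ i, |q i| ≤ 2 * C := by
    intro i
    calc |q i| = |fstar i + (q i - fstar i)| := by ring_nf
      _ ≤ |fstar i| + |q i - fstar i| := abs_add_le _ _
      _ ≤ C + η := add_le_add (hfstar i) (hqf i)
      _ ≤ 2 * C := by linarith
  have hpt : ∀ i, |g (fstar i) - g (q i)| * z i ^ 2 ≤ L * η / k * (g (q i) * z i ^ 2) := by
    intro i
    have h1 : |g (fstar i) - g (q i)| ≤ L * η := by
      calc |g (fstar i) - g (q i)| ≤ L * |fstar i - q i| := hlip _ _ (hfC i) (hqC i)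
        _ ≤ L * η := by
            have := hqf i
            rw [abs_sub_comm] at this
            exact mul_le_mul_of_nonneg_left this hL
    have hkq : k ≤ g (q i) := hconv _ (hqC i)
    have h2 : L * η ≤ L * η / k * g (q i) := by
      rw [div_mul_eq_mul_div, le_div_iff₀ hk]
      exact mul_le_mul_of_nonneg_left hkq (by positivity)
    have hz : (0:ℝ) ≤ z i ^ 2 := sq_nonneg _
    calc |g (fstar i) - g (q i)| * z i ^ 2 ≤ (L * η / k * g (q i)) * z i ^ 2 :=
          mul_le_mul_of_nonneg_right (h1.trans h2) hz
      _ = L * η / k * (g (q i) * z i ^ 2) := by ring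
  have hqsum : (0:ℝ) ≤ ∑ i, g (q i) * z i ^ 2 := by
    apply Finset.sum_nonneg
    intro i _
    have := hconv _ (hqC i)
    have := sq_nonneg (z i)
    nlinarith
  have habs : |(∑ i, g (fstar i) * z i ^ 2) - ∑ i, g (q i) * z i ^ 2|
      ≤ L * η / k * ∑ i, g (q i) * z i ^ 2 := by
    rw [← Finset.sum_sub_distrib, Finset.mul_sum]
    calc |∑ i, (g (fstar i) * z i ^ 2 - g (q i) * z i ^ 2)|
        ≤ ∑ i, |g (fstar i) * z i ^ 2 - g (q i) * z i ^ 2| := Finset.abs_sum_le_sum_abs _ _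
      _ ≤ ∑ i, L * η / k * (g (q i) * z i ^ 2) := by
          apply Finset.sum_le_sum
          intro i _
          have : g (fstar i) * z i ^ 2 - g (q i) * z i ^ 2
              = (g (fstar i) - g (q i)) * z i ^ 2 := by ring
          rw [this, abs_mul, abs_of_nonneg (sq_nonneg (z i))]
          exact hpt i
  refine ⟨habs, ?_⟩
  have h2 : (∑ i, g (fstar i) * z i ^ 2) ≤ 2 * ∑ i, g (q i) * z i ^ 2 := by
    have := abs_le.1 habs |>.2
    nlinarith
  calc Real.sqrt (∑ i, g (fstar i) * z i ^ 2)
      ≤ Real.sqrt (2 * ∑ i, g (q i) * z i ^ 2) := Real.sqrt_le_sqrt h2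
    _ = Real.sqrt 2 * Real.sqrt (∑ i, g (q i) * z i ^ 2) := Real.sqrt_mul (by norm_num) _
end

section
/- Let Σ and Σ₀ be positive self-adjoint trace-class operators on a Hilbert space, n ≥ 1, μ² > 0, k > 0, and let n_eff = sup{ t ≤ n : t Σ₀ ⪯ n Σ + (μ²/k) I }. Set r = n_eff / n and let λ ≥ μ²/n. Then (kΣ + λ I)^{-1} ⪯ 2 r^{-1} (k Σ₀ + r^{-1} λ I)^{-1}. -/
lemma aux_key11 {H : Type*} [NormedAddCommGroup H] [InnerProductSpace ℝ H]
    (C : H →L[ℝ] H) (hsa : ∀ u v : H, (inner ℝ (C u) v : ℝ) = inner ℝ u (C v))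
    (hpos : ∀ u : H, 0 ≤ (inner ℝ u (C u) : ℝ)) (u a c : H) (hc : C c = u) :
    2 * (inner ℝ a u : ℝ) - inner ℝ a (C a) ≤ inner ℝ u c := by
  have h0 := hpos (c - a)
  have hsym : (inner ℝ c (C a) : ℝ) = inner ℝ a (C c) := by
    rw [← hsa]; exact real_inner_comm _ _
  have hexp : (inner ℝ (c - a) (C (c - a)) : ℝ)
      = inner ℝ c (C c) - 2 * inner ℝ a (C c) + inner ℝ a (C a) := by
    rw [map_sub, inner_sub_left, inner_sub_right, inner_sub_right]
    linarith [hsym]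
  rw [hc] at hexp
  have hcu : (inner ℝ c u : ℝ) = inner ℝ u c := real_inner_comm _ _
  linarith [h0, hexp]

/-- Effective-sample-size comparison of resolvents: if `n_eff Σ₀ ⪯ n Σ + (μ²/k) I`,
`r = n_eff/n`, and `λ ≥ μ²/n`, then `(kΣ + λI)⁻¹ ⪯ 2 r⁻¹ (kΣ₀ + r⁻¹λ I)⁻¹`
(the inverses are given as two-sided inverse operators `Ainv`, `Binv`). -/
theorem stmt_11 {H : Type*} [NormedAddCommGroup H] [InnerProductSpace ℝ H]
    (Sig Sig0 Ainv Binv : H →L[ℝ] H)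
    (hSigSa : ∀ u v : H, (inner ℝ (Sig u) v : ℝ) = inner ℝ u (Sig v))
    (hSig0Sa : ∀ u v : H, (inner ℝ (Sig0 u) v : ℝ) = inner ℝ u (Sig0 v))
    (hSigPos : ∀ u : H, 0 ≤ (inner ℝ u (Sig u) : ℝ))
    (hSig0Pos : ∀ u : H, 0 ≤ (inner ℝ u (Sig0 u) : ℝ))
    (n mu2 k lam neff r : ℝ) (hn : 1 ≤ n) (hmu : 0 < mu2) (hk : 0 < k)
    (hneffpos : 0 < neff) (hneffle : neff ≤ n)
    (hdom : ∀ u : H, neff * (inner ℝ u (Sig0 u) : ℝ)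
      ≤ n * (inner ℝ u (Sig u) : ℝ) + mu2 / k * ‖u‖ ^ 2)
    (hr : r = neff / n) (hlam : mu2 / n ≤ lam)
    (hAinv : ∀ u : H, (k • Sig + lam • (1 : H →L[ℝ] H)) (Ainv u) = u ∧
      Ainv ((k • Sig + lam • (1 : H →L[ℝ] H)) u) = u)
    (hBinv : ∀ u : H, (k • Sig0 + (r⁻¹ * lam) • (1 : H →L[ℝ] H)) (Binv u) = u ∧
      Binv ((k • Sig0 + (r⁻¹ * lam) • (1 : H →L[ℝ] H)) u) = u) :
    ∀ u : H, (inner ℝ u (Ainv u) : ℝ) ≤ 2 * r⁻¹ * (inner ℝ u (Binv u) : ℝ) := by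
  intro u
  have hn0 : (0:ℝ) < n := lt_of_lt_of_le one_pos hn
  have hr0 : 0 < r := by rw [hr]; exact div_pos hneffpos hn0
  have hlam0 : 0 < lam := lt_of_lt_of_le (div_pos hmu hn0) hlam
  set a := Ainv u with ha
  set b := Binv u with hb
  have hAu : k • Sig a + lam • a = u := by
    have := (hAinv u).1
    simpa using this
  have hBu : k • Sig0 b + (r⁻¹ * lam) • b = u := by
    have := (hBinv u).1
    simpa using this
  set C : H →L[ℝ] H := (r/2) • (k • Sig0 + (r⁻¹ * lam) • (1 : H →L[ℝ] H)) with hC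
  have hCapp : ∀ x : H, C x = (r/2) • (k • Sig0 x + (r⁻¹ * lam) • x) := by
    intro x; simp [hC]
  have hCsa : ∀ x y : H, (inner ℝ (C x) y : ℝ) = inner ℝ x (C y) := by
    intro x y
    rw [hCapp, hCapp, real_inner_smul_left, real_inner_smul_right,
      inner_add_left, inner_add_right, real_inner_smul_left, real_inner_smul_left,
      real_inner_smul_right, real_inner_smul_right, hSig0Sa]
  have hCpos : ∀ x : H, 0 ≤ (inner ℝ x (C x) : ℝ) := by
    intro x
    rw [hCapp, real_inner_smul_right, inner_add_right, real_inner_smul_right,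
      real_inner_smul_right]
    have h1 : 0 ≤ k * (inner ℝ x (Sig0 x) : ℝ) := mul_nonneg hk.le (hSig0Pos x)
    have h2 : 0 ≤ r⁻¹ * lam * (inner ℝ x x : ℝ) :=
      mul_nonneg (mul_nonneg (inv_nonneg.2 hr0.le) hlam0.le) real_inner_self_nonneg
    have h3 : (0:ℝ) ≤ r/2 := by positivity
    exact mul_nonneg h3 (add_nonneg h1 h2)
  set c : H := (2 * r⁻¹) • b with hcdef
  have hc : C c = u := by
    rw [hCapp, ← hBu]
    simp only [hcdef, map_smul, smul_add, smul_smul]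
    match_scalars <;> field_simp <;> ring
  have hkey := aux_key11 C hCsa hCpos u a c hc
  -- compute inner ℝ a u via A
  have hnorm : (inner ℝ a a : ℝ) = ‖a‖^2 := real_inner_self_eq_norm_sq a
  have hAa : (inner ℝ a u : ℝ) = k * inner ℝ a (Sig a) + lam * ‖a‖^2 := by
    rw [← hAu, inner_add_right, real_inner_smul_right, real_inner_smul_right, hnorm]
  have hCa : (inner ℝ a (C a) : ℝ)
      = (r/2) * (k * inner ℝ a (Sig0 a) + r⁻¹ * lam * ‖a‖^2) := by
    rw [hCapp, real_inner_smul_right, inner_add_right, real_inner_smul_right,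
      real_inner_smul_right, hnorm]
  have hdomA : (inner ℝ a (C a) : ℝ) ≤ inner ℝ a u := by
    rw [hCa, hAa]
    have hd := hdom a
    have hneq : neff = r * n := by rw [hr]; field_simp
    have hml : mu2 ≤ lam * n := (div_le_iff₀ hn0).mp hlam
    have hd' : k * (neff * (inner ℝ a (Sig0 a) : ℝ)) ≤ k * n * (inner ℝ a (Sig a) : ℝ) + mu2 * ‖a‖^2 := by
      have h := mul_le_mul_of_nonneg_left hd hk.le
      have he : k * (n * (inner ℝ a (Sig a) : ℝ) + mu2 / k * ‖a‖^2)
          = k * n * (inner ℝ a (Sig a) : ℝ) + mu2 * ‖a‖^2 := by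
        field_simp
      linarith [he ▸ h]
    have hrinv : (r/2) * (r⁻¹ * lam * ‖a‖^2) = lam/2 * ‖a‖^2 := by
      field_simp
    have hsA := hSigPos a
    have hna : (0:ℝ) ≤ ‖a‖^2 := sq_nonneg _
    rw [mul_add, hrinv, hneq] at *
    nlinarith [mul_nonneg (mul_nonneg hk.le hn0.le) hsA, mul_nonneg hna (sub_nonneg.2 hml), hd', hn0, hr0]
  have hcin : (inner ℝ u c : ℝ) = 2 * r⁻¹ * inner ℝ u b := by
    rw [hcdef, real_inner_smul_right]
  have hcomm : (inner ℝ u a : ℝ) = inner ℝ a u := real_inner_comm _ _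
  linarith [hkey, hdomA, hcin, hcomm]
end

section
/- Let D and D̄ be positive diagonal n×n matrices with entries D_ii, D̄_ii satisfying |D_ii - D̄_ii|/D̄_ii ≤ 1/2 for all i, let X : H → ℝⁿ be a bounded operator from a Hilbert space, λ > 0, and set H_op = (1/n)Xᵀ D X + λI and H̄_op = (1/n)Xᵀ D̄ X + λI. Then -(1/2)H̄_op ⪯ H_op - H̄_op ⪯ (1/2)H̄_op, and the operator Δ = H̄_op^{-1/2} H_op H̄_op^{-1/2} - I satisfies ‖Δ‖ ≤ 1/2. -/
open ContinuousLinearMap in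
lemma aux_norm_le {E : Type*} [NormedAddCommGroup E] [InnerProductSpace ℝ E]
    (T : E →L[ℝ] E) (hT : ∀ x y : E, (inner ℝ (T x) y : ℝ) = inner ℝ x (T y))
    (c : ℝ) (hc : 0 ≤ c) (h : ∀ x : E, |(inner ℝ x (T x) : ℝ)| ≤ c * ‖x‖ ^ 2) :
    ‖T‖ ≤ c := by
  refine T.opNorm_le_bound hc (fun x => ?_)
  by_cases hTx : T x = 0
  · simp [hTx]; positivity
  have hx : x ≠ 0 := by rintro rfl; simp at hTx
  set y : E := (‖x‖ / ‖T x‖) • T x with hy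
  have hTxpos : 0 < ‖T x‖ := norm_pos_iff.mpr hTx
  have hxpos : 0 < ‖x‖ := norm_pos_iff.mpr hx
  have hny : ‖y‖ = ‖x‖ := by
    rw [hy, norm_smul]
    simp [abs_of_nonneg (le_of_lt (div_pos hxpos hTxpos)), div_mul_cancel₀, hTxpos.ne']
  have hinner : (inner ℝ (T x) y : ℝ) = ‖x‖ * ‖T x‖ := by
    rw [hy, real_inner_smul_right, real_inner_self_eq_norm_sq]
    field_simp
  have hpol : 4 * (inner ℝ (T x) y : ℝ) =
      (inner ℝ (x + y) (T (x + y)) : ℝ) - (inner ℝ (x - y) (T (x - y)) : ℝ) := by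
    have hs : (inner ℝ y (T x) : ℝ) = inner ℝ (T x) y := real_inner_comm _ _
    have hs2 : (inner ℝ x (T y) : ℝ) = inner ℝ (T x) y := (hT x y).symm
    simp only [map_add, map_sub, inner_add_left, inner_add_right, inner_sub_left,
      inner_sub_right]
    rw [hs2] at *
    linarith [hs]
  have h1 := h (x + y)
  have h2 := h (x - y)
  have hpar : ‖x + y‖ ^ 2 + ‖x - y‖ ^ 2 = 2 * (‖x‖ ^ 2 + ‖y‖ ^ 2) := by
    have := parallelogram_law_with_norm ℝ x y
    nlinarith [this]
  have habs1 : (inner ℝ (x + y) (T (x + y)) : ℝ) ≤ c * ‖x + y‖ ^ 2 := (abs_le.mp h1).2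
  have habs2 : -(c * ‖x - y‖ ^ 2) ≤ (inner ℝ (x - y) (T (x - y)) : ℝ) := (abs_le.mp h2).1
  have hkey : c * (‖x + y‖ ^ 2 + ‖x - y‖ ^ 2) = 4 * (c * ‖x‖ ^ 2) := by
    rw [hpar, hny]; ring
  have : 4 * (‖x‖ * ‖T x‖) ≤ 4 * (c * ‖x‖ ^ 2) := by
    rw [← hinner, ← hkey]
    nlinarith [hpol, habs1, habs2]
  nlinarith [hxpos]

/-- Relative weight perturbation of the Hessian: if positive diagonal weights satisfy
`|d_i - d̄_i|/d̄_i ≤ 1/2` and `H_op = (1/n)XᵀDX + λI`, `H̄_op = (1/n)XᵀD̄X + λI`, then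
`-(1/2)H̄_op ⪯ H_op - H̄_op ⪯ (1/2)H̄_op` and `Δ = H̄_op^{-1/2} H_op H̄_op^{-1/2} - I`
satisfies `‖Δ‖ ≤ 1/2`. Here `R = H̄_op^{-1/2}` is given as a self-adjoint operator
with `R ∘ R = H̄_op⁻¹`. -/
theorem stmt_16 {H : Type*} [NormedAddCommGroup H] [InnerProductSpace ℝ H]
    [CompleteSpace H] (n : ℕ) (hn : 0 < n)
    (X : H →L[ℝ] EuclideanSpace ℝ (Fin n))
    (dcoef dbar : Fin n → ℝ) (hdpos : ∀ i, 0 < dcoef i) (hdbarpos : ∀ i, 0 < dbar i)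
    (hrel : ∀ i, |dcoef i - dbar i| / dbar i ≤ 1 / 2)
    (Dop Dbarop : EuclideanSpace ℝ (Fin n) →L[ℝ] EuclideanSpace ℝ (Fin n))
    (hDop : ∀ (v : EuclideanSpace ℝ (Fin n)) (i : Fin n), Dop v i = dcoef i * v i)
    (hDbarop : ∀ (v : EuclideanSpace ℝ (Fin n)) (i : Fin n), Dbarop v i = dbar i * v i)
    (lam : ℝ) (hlam : 0 < lam)
    (Hop Hbarop : H →L[ℝ] H)
    (hHop : Hop = (n : ℝ)⁻¹ • (ContinuousLinearMap.adjoint X ∘L Dop ∘L X)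
      + lam • (1 : H →L[ℝ] H))
    (hHbarop : Hbarop = (n : ℝ)⁻¹ • (ContinuousLinearMap.adjoint X ∘L Dbarop ∘L X)
      + lam • (1 : H →L[ℝ] H))
    (R : H →L[ℝ] H)
    (hRsa : ∀ u v : H, (inner ℝ (R u) v : ℝ) = inner ℝ u (R v))
    (hRinv : ∀ u : H, R (R (Hbarop u)) = u ∧ Hbarop (R (R u)) = u) :
    (∀ u : H,
      -(1 / 2) * (inner ℝ u (Hbarop u) : ℝ) ≤ (inner ℝ u ((Hop - Hbarop) u) : ℝ) ∧
        (inner ℝ u ((Hop - Hbarop) u) : ℝ) ≤ (1 / 2) * (inner ℝ u (Hbarop u) : ℝ)) ∧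
      ‖R ∘L Hop ∘L R - 1‖ ≤ 1 / 2 := by
  -- bilinear form of XᵀD'X
  have bil : ∀ (D' : EuclideanSpace ℝ (Fin n) →L[ℝ] EuclideanSpace ℝ (Fin n))
      (d' : Fin n → ℝ), (∀ v i, D' v i = d' i * v i) → ∀ u v : H,
      (inner ℝ u ((ContinuousLinearMap.adjoint X ∘L D' ∘L X) v) : ℝ)
        = ∑ i, d' i * (X u i * X v i) := by
    intro D' d' hD' u v
    rw [ContinuousLinearMap.comp_apply, ContinuousLinearMap.comp_apply,
      ContinuousLinearMap.adjoint_inner_right]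
    simp only [PiLp.inner_apply, RCLike.inner_apply, conj_trivial, hD']
    exact Finset.sum_congr rfl (fun i _ => by ring)
  have hninv : (0:ℝ) ≤ (n : ℝ)⁻¹ := by positivity
  -- term-wise bound
  have habs : ∀ u : H, |∑ i, (dcoef i - dbar i) * (X u i * X u i)|
      ≤ (1/2) * ∑ i, dbar i * (X u i * X u i) := by
    intro u
    calc |∑ i, (dcoef i - dbar i) * (X u i * X u i)|
        ≤ ∑ i, |(dcoef i - dbar i) * (X u i * X u i)| := Finset.abs_sum_le_sum_abs _ _
      _ ≤ ∑ i, (1/2) * (dbar i * (X u i * X u i)) := by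
          refine Finset.sum_le_sum (fun i _ => ?_)
          rw [abs_mul]
          have h1 : |dcoef i - dbar i| ≤ (1/2) * dbar i := by
            have := (div_le_iff₀ (hdbarpos i)).mp (hrel i)
            linarith
          have h2 : |X u i * X u i| = X u i * X u i := abs_of_nonneg (mul_self_nonneg _)
          rw [h2]
          have := mul_self_nonneg (X u i)
          nlinarith [abs_nonneg (dcoef i - dbar i)]
      _ = (1/2) * ∑ i, dbar i * (X u i * X u i) := by rw [Finset.mul_sum]
  have hbar_nonneg : ∀ u : H, (0:ℝ) ≤ ∑ i, dbar i * (X u i * X u i) := by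
    intro u
    exact Finset.sum_nonneg (fun i _ => mul_nonneg (hdbarpos i).le (mul_self_nonneg _))
  -- values of quadratic forms
  have hdiff : ∀ u : H, (inner ℝ u ((Hop - Hbarop) u) : ℝ)
      = (n : ℝ)⁻¹ * ∑ i, (dcoef i - dbar i) * (X u i * X u i) := by
    intro u
    rw [hHop, hHbarop]
    simp only [ContinuousLinearMap.sub_apply, ContinuousLinearMap.add_apply,
      ContinuousLinearMap.smul_apply, ContinuousLinearMap.one_apply,
      inner_sub_right, inner_add_right, real_inner_smul_right]
    rw [bil Dop dcoef hDop u u, bil Dbarop dbar hDbarop u u]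
    have hsplit : ∑ i, (dcoef i - dbar i) * (X u i * X u i)
        = (∑ i, dcoef i * (X u i * X u i)) - ∑ i, dbar i * (X u i * X u i) := by
      rw [← Finset.sum_sub_distrib]
      exact Finset.sum_congr rfl (fun i _ => by ring)
    rw [hsplit]
    ring
  have hbarval : ∀ u : H, (inner ℝ u (Hbarop u) : ℝ)
      = (n : ℝ)⁻¹ * (∑ i, dbar i * (X u i * X u i)) + lam * (inner ℝ u u : ℝ) := by
    intro u
    rw [hHbarop]
    simp only [ContinuousLinearMap.add_apply, ContinuousLinearMap.smul_apply,
      ContinuousLinearMap.one_apply, inner_add_right, real_inner_smul_right]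
    rw [bil Dbarop dbar hDbarop u u]
  -- Part 1
  have part1 : ∀ u : H,
      -(1 / 2) * (inner ℝ u (Hbarop u) : ℝ) ≤ (inner ℝ u ((Hop - Hbarop) u) : ℝ) ∧
        (inner ℝ u ((Hop - Hbarop) u) : ℝ) ≤ (1 / 2) * (inner ℝ u (Hbarop u) : ℝ) := by
    intro u
    rw [hdiff u, hbarval u]
    have h1 := habs u
    have h2 := hbar_nonneg u
    have h3 : (0:ℝ) ≤ lam * (inner ℝ u u : ℝ) :=
      mul_nonneg hlam.le real_inner_self_nonneg
    have h4 := abs_le.mp h1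
    constructor
    · nlinarith [h4.1, mul_le_mul_of_nonneg_left h4.1 hninv]
    · nlinarith [h4.2, mul_le_mul_of_nonneg_left h4.2 hninv]
  refine ⟨part1, ?_⟩
  -- R (Hbarop (R u)) = u
  have hRHR : ∀ u : H, R (Hbarop (R u)) = u := by
    intro u
    have h1 : R (R (Hbarop u)) = u := (hRinv u).1
    set w := R (Hbarop u) with hw
    have h2 : Hbarop (R (R w)) = w := (hRinv w).2
    have : R u = R (R w) := by rw [h1]
    rw [this, h2, hw, h1]
  -- symmetry of Hop
  have e : ∀ a b : H, (inner ℝ a (Hop b) : ℝ)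
      = (n : ℝ)⁻¹ * ∑ i, dcoef i * (X a i * X b i) + lam * (inner ℝ a b : ℝ) := by
    intro a b
    rw [hHop]
    simp only [ContinuousLinearMap.add_apply, ContinuousLinearMap.smul_apply,
      ContinuousLinearMap.one_apply, inner_add_right, real_inner_smul_right]
    rw [bil Dop dcoef hDop a b]
  have hsymmHop : ∀ x y : H, (inner ℝ (Hop x) y : ℝ) = inner ℝ x (Hop y) := by
    intro x y
    have h1 : (inner ℝ (Hop x) y : ℝ) = inner ℝ y (Hop x) := real_inner_comm _ _
    rw [h1, e y x, e x y, real_inner_comm y x]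
    congr 2
    exact Finset.sum_congr rfl (fun i _ => by ring)
  set Δ := R ∘L Hop ∘L R - 1 with hΔ
  have hΔapp : ∀ u : H, Δ u = R (Hop (R u)) - u := by
    intro u; simp [hΔ]
  -- symmetry of Δ
  have hsymmΔ : ∀ x y : H, (inner ℝ (Δ x) y : ℝ) = inner ℝ x (Δ y) := by
    intro x y
    rw [hΔapp, hΔapp, inner_sub_left, inner_sub_right]
    have hmain : (inner ℝ (R (Hop (R x))) y : ℝ) = inner ℝ x (R (Hop (R y))) :=
      calc (inner ℝ (R (Hop (R x))) y : ℝ)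
          = inner ℝ (Hop (R x)) (R y) := hRsa _ _
        _ = inner ℝ (R x) (Hop (R y)) := hsymmHop _ _
        _ = inner ℝ x (R (Hop (R y))) := hRsa _ _
    rw [hmain]
  -- quadratic bound for Δ
  have hquad : ∀ x : H, |(inner ℝ x (Δ x) : ℝ)| ≤ (1/2) * ‖x‖ ^ 2 := by
    intro x
    have e2 : (inner ℝ (R x) (Hbarop (R x)) : ℝ) = inner ℝ x x := by
      rw [hRsa x (Hbarop (R x)), hRHR x]
    have eΔ : (inner ℝ x (Δ x) : ℝ) = inner ℝ (R x) ((Hop - Hbarop) (R x)) := by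
      rw [hΔapp, inner_sub_right, ContinuousLinearMap.sub_apply, inner_sub_right]
      congr 1
      · exact (hRsa x (Hop (R x))).symm
      · exact e2.symm
    have e3 : (inner ℝ (R x) (Hbarop (R x)) : ℝ) = ‖x‖ ^ 2 := by
      rw [e2, real_inner_self_eq_norm_sq]
    obtain ⟨hl, hr⟩ := part1 (R x)
    rw [eΔ, abs_le]
    rw [e3] at hl hr
    constructor <;> linarith
  exact aux_norm_le Δ hsymmΔ (1/2) (by norm_num) hquad
end

section
/- Eigenfunction-bounded trace comparison: let Σ and Σ̂ be positive self-adjoint trace-class operators on a Hilbert space, λ > 0, γ ∈ (0,1), and suppose (1-γ)(Σ + λI) ⪯ Σ̂ + λI. Suppose additionally Σ̂ = (1/n)∑_{i=1}^n φ_i ⊗ φ_i where each φ_i ∈ H satisfies ⟨φ_i, (Σ + λI)^{-1} φ_i⟩ ≤ M₁² Tr((Σ + λI)^{-1}Σ). Then Tr((Σ̂ + λI)^{-1} Σ̂) ≤ M₁² (1-γ)^{-1} Tr((Σ + λI)^{-1} Σ). -/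
open Matrix Finset

lemma my_posDef_smul {d : ℕ} {A : Matrix (Fin d) (Fin d) ℝ} (hA : A.PosDef) {c : ℝ}
    (hc : 0 < c) : (c • A).PosDef := by
  refine Matrix.PosDef.of_dotProduct_mulVec_pos (by rw [Matrix.IsHermitian, conjTranspose_smul, star_trivial, hA.isHermitian.eq]) fun x hx => ?_
  rw [smul_mulVec, dotProduct_smul, smul_eq_mul]
  exact mul_pos hc (hA.dotProduct_mulVec_pos hx)

lemma my_cs {d : ℕ} {A : Matrix (Fin d) (Fin d) ℝ} (hA : A.PosSemidef) (y z : Fin d → ℝ) :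
    (y ⬝ᵥ (A *ᵥ z)) ^ 2 ≤ (y ⬝ᵥ (A *ᵥ y)) * (z ⬝ᵥ (A *ᵥ z)) := by
  obtain ⟨B, rfl⟩ : ∃ B : Matrix (Fin d) (Fin d) ℝ, A = Bᴴ * B := by
    open MatrixOrder in exact CStarAlgebra.nonneg_iff_eq_star_mul_self.mp hA.nonneg
  have key : ∀ u v : Fin d → ℝ, u ⬝ᵥ ((Bᴴ * B) *ᵥ v) = (B *ᵥ u) ⬝ᵥ (B *ᵥ v) := by
    intro u v
    rw [← mulVec_mulVec, dotProduct_mulVec]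
    congr 1
    have : Bᴴ = Bᵀ := by ext i j; simp [conjTranspose_apply]
    rw [this, vecMul_transpose]
  rw [key, key, key]
  simpa only [dotProduct, pow_two] using
    Finset.sum_mul_sq_le_sq_mul_sq Finset.univ (B *ᵥ y) (B *ᵥ z)

lemma my_quad_inv_le {d : ℕ} {A B : Matrix (Fin d) (Fin d) ℝ} (hA : A.PosDef) (hB : B.PosDef)
    {c : ℝ} (hc : 0 < c) (h : (B - c • A).PosSemidef) (x : Fin d → ℝ) :
    x ⬝ᵥ (B⁻¹ *ᵥ x) ≤ c⁻¹ * (x ⬝ᵥ (A⁻¹ *ᵥ x)) := by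
  set y := B⁻¹ *ᵥ x with hy
  set z := A⁻¹ *ᵥ x with hz
  have hBx : B *ᵥ y = x := by
    rw [hy, mulVec_mulVec, Matrix.mul_nonsing_inv _ (isUnit_iff_isUnit_det _ |>.mp hB.isUnit),
      one_mulVec]
  have hAx : A *ᵥ z = x := by
    rw [hz, mulVec_mulVec, Matrix.mul_nonsing_inv _ (isUnit_iff_isUnit_det _ |>.mp hA.isUnit),
      one_mulVec]
  set t := x ⬝ᵥ y with ht
  set q := y ⬝ᵥ (A *ᵥ y) with hq
  set p := x ⬝ᵥ z with hp
  have hq0 : 0 ≤ q := by simpa using hA.posSemidef.dotProduct_mulVec_nonneg y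
  have hp0 : 0 ≤ p := by
    have := hA.inv.posSemidef.dotProduct_mulVec_nonneg x
    simpa [hp, hz] using this
  have hcq : c * q ≤ t := by
    have h0 := h.dotProduct_mulVec_nonneg y
    simp only [star_trivial, sub_mulVec, dotProduct_sub, smul_mulVec,
      dotProduct_smul, smul_eq_mul, hBx] at h0
    have : y ⬝ᵥ x = t := dotProduct_comm y x
    linarith [h0, this.symm.le]
  have hcs : t ^ 2 ≤ q * p := by
    have := my_cs hA.posSemidef y z
    rw [hAx] at this
    have hyx : y ⬝ᵥ x = t := dotProduct_comm y x
    have hzx : z ⬝ᵥ x = p := dotProduct_comm z x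
    rwa [hyx, hzx] at this
  -- conclude t ≤ c⁻¹ * p
  rcases le_or_gt t 0 with h0 | h0
  · exact h0.trans (by positivity)
  · have hct : c * t ≤ p := by nlinarith
    calc t = c⁻¹ * (c * t) := by field_simp
    _ ≤ c⁻¹ * p := by
        apply mul_le_mul_of_nonneg_left hct (by positivity)

lemma my_trace_vmv {d : ℕ} (M : Matrix (Fin d) (Fin d) ℝ) (v : Fin d → ℝ) :
    (M * Matrix.vecMulVec v v).trace = v ⬝ᵥ (M *ᵥ v) := by
  simp only [Matrix.trace, Matrix.diag_apply, Matrix.mul_apply, Matrix.vecMulVec_apply,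
    dotProduct, Matrix.mulVec, Finset.mul_sum]
  exact Finset.sum_congr rfl fun i _ => Finset.sum_congr rfl fun j _ => by ring

/-- Eigenfunction-bounded trace comparison: if `(1-γ)(Σ + λI) ⪯ Σ̂ + λI` and
`Σ̂ = (1/n)∑ φ_i φ_iᵀ` with `⟨φ_i, (Σ+λI)⁻¹φ_i⟩ ≤ M₁² Tr((Σ+λI)⁻¹Σ)` for each `i`,
then `Tr((Σ̂+λI)⁻¹Σ̂) ≤ M₁²(1-γ)⁻¹ Tr((Σ+λI)⁻¹Σ)`. -/
theorem stmt_17 (d n : ℕ) (hn : 0 < n) (Sig : Matrix (Fin d) (Fin d) ℝ)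
    (hSig : Sig.PosSemidef) (φ : Fin n → (Fin d → ℝ)) (Sighat : Matrix (Fin d) (Fin d) ℝ)
    (hSighat : Sighat = (n : ℝ)⁻¹ • ∑ i, Matrix.vecMulVec (φ i) (φ i))
    (lam γ M1 : ℝ) (hlam : 0 < lam) (hγ0 : 0 < γ) (hγ1 : γ < 1)
    (hloewner : ((Sighat + lam • (1 : Matrix (Fin d) (Fin d) ℝ))
        - (1 - γ) • (Sig + lam • (1 : Matrix (Fin d) (Fin d) ℝ))).PosSemidef)
    (hquad : ∀ i, dotProduct (φ i)
        (Matrix.mulVec (Sig + lam • (1 : Matrix (Fin d) (Fin d) ℝ))⁻¹ (φ i))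
      ≤ M1 ^ 2 * ((Sig + lam • (1 : Matrix (Fin d) (Fin d) ℝ))⁻¹ * Sig).trace) :
    ((Sighat + lam • (1 : Matrix (Fin d) (Fin d) ℝ))⁻¹ * Sighat).trace ≤
      M1 ^ 2 * (1 - γ)⁻¹ * ((Sig + lam • (1 : Matrix (Fin d) (Fin d) ℝ))⁻¹ * Sig).trace := by
  set A := Sig + lam • (1 : Matrix (Fin d) (Fin d) ℝ) with hAdef
  set Bm := Sighat + lam • (1 : Matrix (Fin d) (Fin d) ℝ) with hBdef
  have hc : (0:ℝ) < 1 - γ := by linarith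
  have hA : A.PosDef := Matrix.PosDef.posSemidef_add hSig (my_posDef_smul Matrix.PosDef.one hlam)
  have hB : Bm.PosDef := by
    have : Bm = (Bm - (1 - γ) • A) + (1 - γ) • A := by abel
    rw [this]
    exact Matrix.PosDef.posSemidef_add hloewner (my_posDef_smul hA hc)
  set T := (A⁻¹ * Sig).trace with hT
  have key : ∀ i, (φ i) ⬝ᵥ (Bm⁻¹ *ᵥ (φ i)) ≤ (1 - γ)⁻¹ * (M1 ^ 2 * T) := fun i =>
    (my_quad_inv_le hA hB hc hloewner (φ i)).trans
      (mul_le_mul_of_nonneg_left (hquad i) (by positivity))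
  have htr : (Bm⁻¹ * Sighat).trace = (n : ℝ)⁻¹ * ∑ i, (φ i) ⬝ᵥ (Bm⁻¹ *ᵥ (φ i)) := by
    rw [hSighat, Matrix.mul_smul, Matrix.trace_smul, Matrix.mul_sum, Matrix.trace_sum,
      smul_eq_mul]
    congr 1
    exact Finset.sum_congr rfl fun i _ => my_trace_vmv _ _
  rw [htr]
  have hsum : ∑ i, (φ i) ⬝ᵥ (Bm⁻¹ *ᵥ (φ i)) ≤ (n : ℝ) * ((1 - γ)⁻¹ * (M1 ^ 2 * T)) := by
    calc ∑ i, (φ i) ⬝ᵥ (Bm⁻¹ *ᵥ (φ i)) ≤ ∑ _i : Fin n, (1 - γ)⁻¹ * (M1 ^ 2 * T) :=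
          Finset.sum_le_sum fun i _ => key i
    _ = (n : ℝ) * ((1 - γ)⁻¹ * (M1 ^ 2 * T)) := by
          simp [Finset.sum_const, Finset.card_univ, nsmul_eq_mul]
  have hn' : (0:ℝ) < (n : ℝ) := by exact_mod_cast hn
  calc (n : ℝ)⁻¹ * ∑ i, (φ i) ⬝ᵥ (Bm⁻¹ *ᵥ (φ i))
      ≤ (n : ℝ)⁻¹ * ((n : ℝ) * ((1 - γ)⁻¹ * (M1 ^ 2 * T))) :=
        mul_le_mul_of_nonneg_left hsum (by positivity)
    _ = M1 ^ 2 * (1 - γ)⁻¹ * T := by field_simp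
end
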